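/- Let α and β be algebraic numbers with αβ = 2^(k-1) for some integer k ≥ 2, and suppose α + β ∈ 3·Z̄₃ (i.e. the 3-adic valuation of α+β is positive, under a fixed embedding into an algebraic closure of Q₃) while α and β are 3-adic units. If α/β is a root of unity ζ, then ζ = -1 (equivalently α + β = 0). -/

import Mathlib

open Finset in
/-- If `v η ≤ 1`, then `1 - η^i` is "divisible" by `1 - η` valuation-wise. -/
lemma aux_powsub {K : Type*} [Field K] (v : Valuation K NNReal) (η : K)
    (hη : v η ≤ 1) : ∀ i : ℕ, v (1 - η ^ i) ≤ v (1 - η) := by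
  intro i
  induction i with
  | zero => simp
  | succ i ih =>
    have key : 1 - η ^ (i + 1) = (1 - η ^ i) + η ^ i * (1 - η) := by ring
    rw [key]
    refine le_trans (v.map_add _ _) (max_le ih ?_)
    rw [v.map_mul, v.map_pow]
    calc v η ^ i * v (1 - η) ≤ 1 * v (1 - η) := by
          exact mul_le_mul_of_nonneg_right (pow_le_one₀ zero_le hη) zero_le
      _ = v (1 - η) := one_mul _

open Finset in
/-- A root of unity that is `3`-adically within `3⁻¹` of `1` equals `1`. -/
lemma aux_root_of_unity [Fact (Nat.Prime 3)] {K : Type*} [Field K] [Algebra ℚ_[3] K]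
    (v : Valuation K NNReal)
    (hv : ∀ x : ℚ_[3], v (algebraMap ℚ_[3] K x) = ‖x‖₊) :
    ∀ m : ℕ, ∀ η : K, v η = 1 → v (1 - η) ≤ (3 : NNReal)⁻¹ → 0 < m → η ^ m = 1 →
      η = 1 := by
  have hv3 : v (3 : K) = (3 : NNReal)⁻¹ := by
    have h3 : (3 : K) = algebraMap ℚ_[3] K (3 : ℚ_[3]) := by
      rw [show ((3 : ℚ_[3]) : ℚ_[3]) = ((3 : ℕ) : ℚ_[3]) by norm_num, map_natCast]
      norm_num
    rw [h3, hv]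
    ext
    push_cast [coe_nnnorm]
    simpa using Padic.norm_p (p := 3)
  intro m
  induction m using Nat.strong_induction_on with
  | _ m IH =>
    intro η hη hsmall hm hpow
    by_cases h3m : 3 ∣ m
    · -- reduce using η ^ 3
      obtain ⟨m', rfl⟩ := h3m
      have hm' : 0 < m' := by omega
      have hcube : η ^ 3 = 1 := by
        refine IH m' ?_ (η ^ 3) ?_ ?_ hm' ?_
        · omega
        · rw [v.map_pow, hη, one_pow]
        · exact le_trans (aux_powsub v η hη.le 3) hsmall
        · rw [← pow_mul]; exact hpow
      -- now show η = 1
      by_contra hne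
      have hsum3 : η ^ 2 + η + 1 = 0 := by
        have : (η - 1) * (η ^ 2 + η + 1) = 0 := by
          have : (η - 1) * (η ^ 2 + η + 1) = η ^ 3 - 1 := by ring
          rw [this, hcube, sub_self]
        rcases mul_eq_zero.mp this with h | h
        · exact absurd (by linear_combination h) hne
        · exact h
      have hsq : (1 - η) ^ 2 = -(3 * η) := by linear_combination hsum3
      have hval : v (1 - η) ^ 2 = (3 : NNReal)⁻¹ := by
        rw [← v.map_pow, hsq, v.map_neg, v.map_mul, hv3, hη, mul_one]
      have hle : v (1 - η) ^ 2 ≤ (3 : NNReal)⁻¹ ^ 2 :=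
        pow_le_pow_left₀ zero_le hsmall 2
      rw [hval] at hle
      have : ¬ ((3 : NNReal)⁻¹ ≤ (3 : NNReal)⁻¹ ^ 2) := by
        rw [not_le, ← NNReal.coe_lt_coe]
        push_cast
        norm_num
      exact this hle
    · -- m coprime to 3
      by_contra hne
      have hgeom : ∑ i ∈ Finset.range m, η ^ i = 0 := by
        have := geom_sum_eq (x := η) (fun h => hne h) m
        rw [this, hpow, sub_self, zero_div]
      have hcast : (m : K) = ∑ i ∈ Finset.range m, (1 - η ^ i) := by
        rw [Finset.sum_sub_distrib, hgeom, sub_zero, Finset.sum_const,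
          Finset.card_range, nsmul_eq_mul, mul_one]
      have hvm_le : v (m : K) ≤ (3 : NNReal)⁻¹ := by
        rw [hcast]
        refine v.map_sum_le fun i _ => ?_
        exact le_trans (aux_powsub v η hη.le i) hsmall
      have hvm_eq : v (m : K) = 1 := by
        have h1 : (m : K) = algebraMap ℚ_[3] K ((m : ℚ_[3])) := by
          rw [map_natCast]
        rw [h1, hv]
        have hle1 : ‖((m : ℤ) : ℚ_[3])‖ ≤ 1 := Padic.norm_int_le_one _
        have hnlt : ¬ ‖((m : ℤ) : ℚ_[3])‖ < 1 := by
          rw [Padic.norm_intCast_lt_one_iff]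
          exact_mod_cast h3m
        have : ‖((m : ℤ) : ℚ_[3])‖ = 1 := le_antisymm hle1 (not_lt.mp hnlt)
        ext
        push_cast [coe_nnnorm]
        simpa using this
      rw [hvm_eq] at hvm_le
      have : ¬ ((1 : NNReal) ≤ (3 : NNReal)⁻¹) := by
        rw [not_le, ← NNReal.coe_lt_coe]
        push_cast
        norm_num
      exact this hvm_le

/-- Let `α` and `β` be algebraic numbers with `α * β = 2 ^ (k - 1)` for some
integer `k ≥ 2`, viewed inside an algebraic closure `K` of `ℚ₃` (with `v` the unique extension
of the 3-adic valuation).  Suppose `α` and `β` are 3-adic units while `α + β ∈ 3 · Z̄₃`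
(i.e. `v (α + β) ≤ v 3`).  If `α / β` is a root of unity `ζ`, then `ζ = -1`
(equivalently `α + β = 0`). -/
theorem stmt_0 [Fact (Nat.Prime 3)]
    (K : Type*) [Field K] [CharZero K] [Algebra ℚ_[3] K] [IsAlgClosure ℚ_[3] K]
    (v : Valuation K NNReal)
    (hv : ∀ x : ℚ_[3], v (algebraMap ℚ_[3] K x) = ‖x‖₊)
    (k : ℕ) (hk : 2 ≤ k) (α β ζ : K)
    (hαalg : IsAlgebraic ℚ α) (hβalg : IsAlgebraic ℚ β)
    (hprod : α * β = (2 : K) ^ (k - 1))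
    (hαunit : v α = 1) (hβunit : v β = 1)
    (hsum : v (α + β) ≤ v (3 : K))
    (hζ : α = ζ * β)
    (hroot : ∃ m : ℕ, 0 < m ∧ ζ ^ m = 1) :
    ζ = -1 ∧ α + β = 0 := by
  obtain ⟨m, hm, hζm⟩ := hroot
  have hv3 : v (3 : K) = (3 : NNReal)⁻¹ := by
    have h3 : (3 : K) = algebraMap ℚ_[3] K (3 : ℚ_[3]) := by
      rw [show ((3 : ℚ_[3]) : ℚ_[3]) = ((3 : ℕ) : ℚ_[3]) by norm_num, map_natCast]
      norm_num
    rw [h3, hv]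
    ext
    push_cast [coe_nnnorm]
    simpa using Padic.norm_p (p := 3)
  have hvζ : v ζ = 1 := by
    have : v α = v ζ * v β := by rw [hζ, v.map_mul]
    rw [hαunit, hβunit, mul_one] at this
    exact this.symm
  have hfac : α + β = (ζ + 1) * β := by rw [hζ]; ring
  have hvsum : v (ζ + 1) ≤ (3 : NNReal)⁻¹ := by
    have : v (α + β) = v (ζ + 1) * v β := by rw [hfac, v.map_mul]
    rw [hβunit, mul_one] at this
    rw [← this, ← hv3]
    exact hsum
  set η : K := -ζ with hηdef
  have hvη : v η = 1 := by rw [hηdef, v.map_neg, hvζ]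
  have hsmallη : v (1 - η) ≤ (3 : NNReal)⁻¹ := by
    have : (1 : K) - η = ζ + 1 := by rw [hηdef]; ring
    rw [this]; exact hvsum
  have hηpow : η ^ (2 * m) = 1 := by
    rw [hηdef, pow_mul, neg_sq, ← pow_mul, mul_comm, pow_mul, hζm, one_pow]
  have hη1 : η = 1 := aux_root_of_unity v hv (2 * m) η hvη hsmallη (by omega) hηpow
  have hζ1 : ζ = -1 := by
    rw [hηdef] at hη1
    linear_combination -hη1
  constructor
  · exact hζ1
  · rw [hfac, hζ1]; ring
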